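/- Let μ > δ' > 0, η_0 ∈ ℕ, and suppose (τ_ℓ)_{ℓ≥0} and (η_ℓ)_{ℓ≥0} are nonnegative sequences satisfying |η_ℓ − μℓ − η_0| ≤ δ'(ℓ+η_0) for all ℓ, and τ_ℓ − τ_{ℓ−1} ≤ 2^{δ'(ℓ−1+η_0)}·2^{2η_{ℓ−1}} for all ℓ≥1, with τ_0=0. Then for every ν̂ ∈ (0,1) there exists δ̂ > 0 such that if δ' ≤ δ̂ and η_0 is large enough (depending only on ν̂, μ), then τ_ℓ^{1−ν̂} ≤ (1/2)·2^{2η_ℓ} for all ℓ ≥ 0. -/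
import Mathlib


lemma aux_coef2 (nu δ' : ℝ) (h0 : 0 < nu) (h1 : nu < 1) (hδ : 0 < δ')
    (hδν : δ' ≤ nu / 10) : (1 - nu) * (2 + 3 * δ') + 2 * δ' ≤ 2 - 3 * nu / 2 := by
  nlinarith [mul_nonneg h0.le hδ.le]

lemma aux_coef3 (nu μ δ' : ℝ) (h0 : 0 < nu) (h1 : nu < 1) (hμ : 0 < μ) (hδ : 0 < δ')
    (hδν : δ' ≤ nu * μ / 10) :
    (1 - nu) * (nu * μ + 2 * μ + 3 * δ') + 2 * δ' ≤ 2 * μ := by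
  nlinarith [mul_nonneg (mul_nonneg h0.le h0.le) hμ.le, mul_nonneg h0.le hδ.le]

/-- Deterministic content of Proposition 6.2(ii): if the cone bound
|η_ℓ − μℓ − η₀| ≤ δ'(ℓ+η₀) holds and the dwell times satisfy
τ_ℓ − τ_{ℓ-1} ≤ 2^{δ'(ℓ−1+η₀)}·2^{2η_{ℓ−1}}, then for every ν̂ ∈ (0,1) there is δ̂ > 0
such that for δ' ≤ δ̂ and η₀ large enough (depending only on ν̂ and μ),
τ_ℓ^{1−ν̂} ≤ (1/2)·2^{2η_ℓ} for all ℓ. -/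
theorem stmt_12 (μ : ℝ) (hμ : 0 < μ) (nu : ℝ) (hnu0 : 0 < nu) (hnu1 : nu < 1) :
    ∃ deltahat > (0:ℝ), ∃ N : ℝ, ∀ (δ' : ℝ) (η τ : ℕ → ℝ),
      0 < δ' → δ' < μ → δ' ≤ deltahat → N ≤ η 0 →
      (∀ ℓ : ℕ, 0 ≤ η ℓ) → (∀ ℓ : ℕ, 0 ≤ τ ℓ) → τ 0 = 0 →
      (∀ ℓ : ℕ, |η ℓ - μ * ℓ - η 0| ≤ δ' * (ℓ + η 0)) →
      (∀ ℓ : ℕ, 1 ≤ ℓ → τ ℓ - τ (ℓ - 1) ≤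
        (2:ℝ) ^ (δ' * ((ℓ:ℝ) - 1 + η 0)) * (2:ℝ) ^ (2 * η (ℓ - 1))) →
      ∀ ℓ : ℕ, (τ ℓ) ^ (1 - nu) ≤ (1/2) * (2:ℝ) ^ (2 * η ℓ) := by
  set ε : ℝ := nu * μ with hεdef
  have hε : 0 < ε := mul_pos hnu0 hμ
  set x : ℝ := (2:ℝ) ^ ε - 1 with hxdef
  have h2ε : (1:ℝ) < (2:ℝ) ^ ε := by
    have := Real.rpow_lt_rpow_of_exponent_lt (x := 2) one_lt_two hε
    simpa using this
  have hx : 0 < x := by simp only [hxdef]; linarith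
  set K : ℝ := Real.logb 2 (1/x) with hKdef
  have hKeq : (2:ℝ) ^ K = 1 / x :=
    Real.rpow_logb two_pos (by norm_num) (by positivity)
  clear_value K
  clear_value x
  refine ⟨min (nu * μ) nu / 10, by positivity, (max K 0 + 1) * 2 / (3 * nu), ?_⟩
  intro δ' η τ hδ0 hδμ hδhat hN hη hτpos hτ0 hcone hdwell
  have hNpos : (0:ℝ) < (max K 0 + 1) * 2 / (3 * nu) := by
    have : (0:ℝ) ≤ max K 0 := le_max_right _ _
    positivity
  have hη0 : 0 ≤ η 0 := hη 0
  -- the cone bounds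
  have hup : ∀ ℓ : ℕ, η ℓ ≤ μ * ℓ + η 0 + δ' * (ℓ + η 0) := by
    intro ℓ
    have := (abs_le.1 (hcone ℓ)).2
    linarith
  have hlow : ∀ ℓ : ℕ, μ * ℓ + η 0 - δ' * (ℓ + η 0) ≤ η ℓ := by
    intro ℓ
    have := (abs_le.1 (hcone ℓ)).1
    linarith
  -- geometric bound on τ
  set A : ℕ → ℝ := fun ℓ => (2 + 3 * δ') * η 0 + (2 * μ + 3 * δ') * ℓ with hAdef
  have hτbound : ∀ m : ℕ, τ m ≤ m * (2:ℝ) ^ (A m) := by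
    intro m
    induction m with
    | zero => simp [hτ0]
    | succ m ih =>
      have hdw := hdwell (m + 1) (Nat.le_add_left 1 m)
      simp only [Nat.add_sub_cancel] at hdw
      have hinc : τ (m + 1) - τ m ≤ (2:ℝ) ^ (A (m + 1)) := by
        have h1 : (2:ℝ) ^ (δ' * ((↑(m+1):ℝ) - 1 + η 0)) * (2:ℝ) ^ (2 * η m)
            = (2:ℝ) ^ (δ' * ((↑(m+1):ℝ) - 1 + η 0) + 2 * η m) :=
          (Real.rpow_add two_pos _ _).symm
        have h2 : δ' * ((↑(m+1):ℝ) - 1 + η 0) + 2 * η m ≤ A (m + 1) := by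
          have := hup m
          have hm0 : (0:ℝ) ≤ (m:ℝ) := Nat.cast_nonneg m
          simp only [hAdef, Nat.cast_succ]
          push_cast
          nlinarith
        calc τ (m + 1) - τ m ≤ _ := hdw
          _ = _ := h1
          _ ≤ (2:ℝ) ^ (A (m + 1)) :=
            Real.rpow_le_rpow_of_exponent_le one_le_two h2
      have hAm : (2:ℝ) ^ (A m) ≤ (2:ℝ) ^ (A (m + 1)) := by
        apply Real.rpow_le_rpow_of_exponent_le one_le_two
        simp only [hAdef, Nat.cast_succ]
        nlinarith
      have hm0 : (0:ℝ) ≤ (m:ℝ) := Nat.cast_nonneg m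
      have : τ (m+1) ≤ τ m + (2:ℝ) ^ (A (m+1)) := by linarith
      calc τ (m+1) ≤ τ m + (2:ℝ) ^ (A (m+1)) := this
        _ ≤ (m:ℝ) * (2:ℝ) ^ (A m) + (2:ℝ) ^ (A (m+1)) := by linarith
        _ ≤ (m:ℝ) * (2:ℝ) ^ (A (m+1)) + (2:ℝ) ^ (A (m+1)) := by
            have := mul_le_mul_of_nonneg_left hAm hm0
            linarith
        _ = (↑(m+1):ℝ) * (2:ℝ) ^ (A (m+1)) := by push_cast; ring
  -- bound ℓ by an exponential: ℓ ≤ 2^K · 2^(ε ℓ)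
  have hℓexp : ∀ m : ℕ, (m:ℝ) ≤ (2:ℝ) ^ (K + ε * m) := by
    intro m
    have hb := one_add_mul_le_pow (a := x) (by linarith) m
    have h1x : (1:ℝ) + x = (2:ℝ) ^ ε := by simp [hxdef]
    have hpow : ((1:ℝ) + x) ^ m = (2:ℝ) ^ (ε * m) := by
      rw [h1x, ← Real.rpow_natCast ((2:ℝ) ^ ε) m, ← Real.rpow_mul (by norm_num)]
    have : (m:ℝ) * x ≤ (2:ℝ) ^ (ε * m) := by
      rw [← hpow]; linarith
    rw [Real.rpow_add two_pos, hKeq]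
    rw [div_mul_eq_mul_div, le_div_iff₀ hx, one_mul]
    linarith [this]
  -- combined bound on τ
  have hτfinal : ∀ m : ℕ, τ m ≤ (2:ℝ) ^ (K + ε * m + A m) := by
    intro m
    calc τ m ≤ (m:ℝ) * (2:ℝ) ^ (A m) := hτbound m
      _ ≤ (2:ℝ) ^ (K + ε * m) * (2:ℝ) ^ (A m) := by
          have := hℓexp m
          have : (m:ℝ) * (2:ℝ) ^ (A m) ≤ (2:ℝ) ^ (K + ε * m) * (2:ℝ) ^ (A m) :=
            mul_le_mul_of_nonneg_right this (le_of_lt (Real.rpow_pos_of_pos two_pos _))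
          exact this
      _ = (2:ℝ) ^ (K + ε * m + A m) := (Real.rpow_add two_pos _ _).symm
  -- main inequality
  intro ℓ
  have hm0 : (0:ℝ) ≤ (ℓ:ℝ) := Nat.cast_nonneg ℓ
  have hν' : (0:ℝ) ≤ 1 - nu := by linarith
  have step1 : (τ ℓ) ^ (1 - nu) ≤ ((2:ℝ) ^ (K + ε * ℓ + A ℓ)) ^ (1 - nu) :=
    Real.rpow_le_rpow (hτpos ℓ) (hτfinal ℓ) hν'
  have step2 : ((2:ℝ) ^ (K + ε * ℓ + A ℓ)) ^ (1 - nu)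
      = (2:ℝ) ^ ((K + ε * ℓ + A ℓ) * (1 - nu)) := by
    rw [← Real.rpow_mul (by norm_num)]
  -- exponent comparison
  have hδnu : δ' ≤ nu / 10 := le_trans hδhat (by
    have := min_le_right (nu * μ) nu
    linarith)
  have hδνμ : δ' ≤ nu * μ / 10 := le_trans hδhat (by
    have := min_le_left (nu * μ) nu
    linarith)
  have hKmax : (1 - nu) * K ≤ max K 0 := by
    rcases le_or_gt K 0 with h | h
    · have : (1 - nu) * K ≤ 0 := mul_nonpos_of_nonneg_of_nonpos hν' h
      exact le_trans this (le_max_right _ _)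
    · have : (1 - nu) * K ≤ 1 * K := by nlinarith
      simpa using le_trans this (le_max_left _ _)
  have hNη : max K 0 + 1 ≤ (3 * nu / 2) * η 0 := by
    have h3ν : (0:ℝ) < 3 * nu := by linarith
    rw [div_le_iff₀ h3ν] at hN
    linarith
  have p1 : (1 - nu) * K + 1 ≤ (3 * nu / 2) * η 0 := by linarith
  have p2 : (1 - nu) * ((2 + 3 * δ') * η 0) + 2 * δ' * η 0 ≤ (2 - 3 * nu / 2) * η 0 := by
    have c := aux_coef2 nu δ' hnu0 hnu1 hδ0 hδnu
    have h := mul_le_mul_of_nonneg_right c hη0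
    linarith only [h]
  have p3 : (1 - nu) * ((ε + 2 * μ + 3 * δ') * ℓ) + 2 * δ' * ℓ ≤ 2 * μ * ℓ := by
    have c : (1 - nu) * (ε + 2 * μ + 3 * δ') + 2 * δ' ≤ 2 * μ := by
      rw [hεdef]; exact aux_coef3 nu μ δ' hnu0 hnu1 hμ hδ0 hδνμ
    have h := mul_le_mul_of_nonneg_right c hm0
    linarith only [h]
  have hexp : (K + ε * ℓ + A ℓ) * (1 - nu) ≤ 2 * η ℓ - 1 := by
    have hl := hlow ℓ
    simp only [hAdef]
    linarith only [p1, p2, p3, hl]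
  have step3 : (2:ℝ) ^ ((K + ε * ℓ + A ℓ) * (1 - nu)) ≤ (2:ℝ) ^ (2 * η ℓ - 1) :=
    Real.rpow_le_rpow_of_exponent_le one_le_two hexp
  have step4 : (2:ℝ) ^ (2 * η ℓ - 1) = (1/2) * (2:ℝ) ^ (2 * η ℓ) := by
    rw [Real.rpow_sub two_pos, Real.rpow_one]
    ring
  calc (τ ℓ) ^ (1 - nu) ≤ _ := step1
    _ = _ := step2
    _ ≤ _ := step3
    _ = _ := step4
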